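/- Integration by parts on the unit circle for the pre-Schwarzian: let 0 < r < 1 and let ψ be holomorphic on the annulus {w ∈ ℂ : r < |w| < 1/r} with ψ'(w) ≠ 0 for every w with |w| = 1. Then ∫_𝕋 (w²·ψ''(w)/ψ'(w)) · |ψ'(w)|^{−2} ds(w) = ∫_𝕋 (1 + conj(w·ψ''(w)/ψ'(w))) · w · |ψ'(w)|^{−2} ds(w). -/

import Mathlib

open MeasureTheory

/-- The point `e^{iθ}` on the unit circle. -/
noncomputable def circpt (θ : ℝ) : ℂ := Complex.exp (θ * Complex.I)

lemma circpt_abs (θ : ℝ) : ‖circpt θ‖ = 1 := by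
  simp [circpt, Complex.norm_exp]

lemma circpt_hasDerivAt (θ : ℝ) : HasDerivAt circpt (circpt θ * Complex.I) θ := by
  have h1 : HasDerivAt (fun θ : ℝ => (θ : ℂ) * Complex.I) Complex.I θ := by
    simpa using (Complex.ofRealCLM.hasDerivAt (x := θ)).mul_const Complex.I
  exact (Complex.hasDerivAt_exp ((θ : ℂ) * Complex.I)).comp θ h1

lemma circpt_continuous : Continuous circpt := by
  unfold circpt; fun_prop

lemma alg_identity (w A B : ℂ) (hA : A ≠ 0) (hcA : (starRingEnd ℂ) A ≠ 0) :
    Complex.I * (w * Complex.I) * (A * (starRingEnd ℂ) A)⁻¹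
      + Complex.I * w *
        (-((A * (starRingEnd ℂ) A) ^ 2)⁻¹ *
          (B * (w * Complex.I) * (starRingEnd ℂ) A
            + A * (starRingEnd ℂ) (B * (w * Complex.I))))
    = w ^ 2 * B / A * (A * (starRingEnd ℂ) A)⁻¹
      - (1 + (starRingEnd ℂ) (w * B / A)) * w * (A * (starRingEnd ℂ) A)⁻¹ := by
  simp only [map_mul, map_div₀, Complex.conj_I]
  field_simp
  linear_combination (w * A * (starRingEnd ℂ) A + w * A * (starRingEnd ℂ) B * (starRingEnd ℂ) w
        - w^2 * (starRingEnd ℂ) A * B) * Complex.I_sq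

/-- Integration by parts on the unit circle for the pre-Schwarzian: for `ψ` holomorphic
on the annulus `{r < |w| < 1/r}` with nonvanishing derivative on the unit circle,
`∫_𝕋 (w² ψ''/ψ')·|ψ'|^{−2} ds(w) = ∫_𝕋 (1 + conj(w ψ''/ψ'))·w·|ψ'|^{−2} ds(w)`,
the circle integrals being parametrised by arc length via `θ ↦ e^{iθ}`. -/
theorem circle_integration_by_parts
    (r : ℝ) (hr0 : 0 < r) (hr1 : r < 1) (ψ : ℂ → ℂ)
    (hhol : DifferentiableOn ℂ ψ {w : ℂ | r < ‖w‖ ∧ ‖w‖ < 1 / r})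
    (hne : ∀ w : ℂ, ‖w‖ = 1 → deriv ψ w ≠ 0) :
    (∫ θ in (0 : ℝ)..(2 * Real.pi),
      (circpt θ) ^ 2 * deriv (deriv ψ) (circpt θ) / deriv ψ (circpt θ)
        * ((‖deriv ψ (circpt θ)‖ ^ 2 : ℝ) : ℂ)⁻¹) =
    ∫ θ in (0 : ℝ)..(2 * Real.pi),
      (1 + (starRingEnd ℂ)
          ((circpt θ) * deriv (deriv ψ) (circpt θ) / deriv ψ (circpt θ)))
        * (circpt θ) * ((‖deriv ψ (circpt θ)‖ ^ 2 : ℝ) : ℂ)⁻¹ := by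
  set S : Set ℂ := {w : ℂ | r < ‖w‖ ∧ ‖w‖ < 1 / r} with hS_def
  have hS : IsOpen S :=
    (isOpen_lt continuous_const continuous_norm).inter
      (isOpen_lt continuous_norm continuous_const)
  have hmem : ∀ θ : ℝ, circpt θ ∈ S := by
    intro θ
    refine ⟨by rw [circpt_abs]; exact hr1, ?_⟩
    rw [circpt_abs]
    exact (one_lt_one_div hr0 hr1)
  have hana : AnalyticOnNhd ℂ ψ S := hhol.analyticOnNhd hS
  have hana' : AnalyticOnNhd ℂ (deriv ψ) S := hana.deriv
  -- derivative of θ ↦ ψ'(circpt θ)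
  have hA' : ∀ θ : ℝ, HasDerivAt (fun θ => deriv ψ (circpt θ))
      (deriv (deriv ψ) (circpt θ) * (circpt θ * Complex.I)) θ := fun θ =>
    ((hana' _ (hmem θ)).differentiableAt.hasDerivAt).comp θ (circpt_hasDerivAt θ)
  have hAne : ∀ θ : ℝ, deriv ψ (circpt θ) ≠ 0 := fun θ => hne _ (circpt_abs θ)
  have hcAne : ∀ θ : ℝ, (starRingEnd ℂ) (deriv ψ (circpt θ)) ≠ 0 := by
    intro θ; simpa using hAne θ
  -- the primitive
  set G : ℝ → ℂ := fun θ => Complex.I * circpt θ *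
    (deriv ψ (circpt θ) * (starRingEnd ℂ) (deriv ψ (circpt θ)))⁻¹ with hG_def
  set f₁ : ℝ → ℂ := fun θ =>
    (circpt θ) ^ 2 * deriv (deriv ψ) (circpt θ) / deriv ψ (circpt θ)
      * ((‖deriv ψ (circpt θ)‖ ^ 2 : ℝ) : ℂ)⁻¹ with hf₁_def
  set f₂ : ℝ → ℂ := fun θ =>
    (1 + (starRingEnd ℂ)
        ((circpt θ) * deriv (deriv ψ) (circpt θ) / deriv ψ (circpt θ)))
      * (circpt θ) * ((‖deriv ψ (circpt θ)‖ ^ 2 : ℝ) : ℂ)⁻¹ with hf₂_def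
  have hcast : ∀ θ : ℝ, ((‖deriv ψ (circpt θ)‖ ^ 2 : ℝ) : ℂ)
      = deriv ψ (circpt θ) * (starRingEnd ℂ) (deriv ψ (circpt θ)) := by
    intro θ
    rw [Complex.sq_norm, Complex.mul_conj]
  have hderiv : ∀ θ : ℝ, HasDerivAt G (f₁ θ - f₂ θ) θ := by
    intro θ
    have hprod : HasDerivAt
        (fun θ => deriv ψ (circpt θ) * (starRingEnd ℂ) (deriv ψ (circpt θ)))
        (deriv (deriv ψ) (circpt θ) * (circpt θ * Complex.I)
            * (starRingEnd ℂ) (deriv ψ (circpt θ))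
          + deriv ψ (circpt θ)
            * (starRingEnd ℂ) (deriv (deriv ψ) (circpt θ) * (circpt θ * Complex.I))) θ :=
      (hA' θ).mul ((hA' θ).star)
    have hprodne : deriv ψ (circpt θ) * (starRingEnd ℂ) (deriv ψ (circpt θ)) ≠ 0 :=
      mul_ne_zero (hAne θ) (hcAne θ)
    have hinv := (hasDerivAt_inv hprodne).comp θ hprod
    have hG := ((circpt_hasDerivAt θ).const_mul Complex.I).mul hinv
    refine HasDerivAt.congr_deriv hG ?_
    simp only [hf₁_def, hf₂_def, Function.comp_apply]
    rw [hcast θ]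
    exact (alg_identity (circpt θ) (deriv ψ (circpt θ))
      (deriv (deriv ψ) (circpt θ)) (hAne θ) (hcAne θ))
  -- continuity / integrability
  have hcont1 : Continuous fun θ => deriv ψ (circpt θ) := by
    rw [continuous_iff_continuousAt]
    intro θ
    exact ((hana' _ (hmem θ)).continuousAt).comp circpt_continuous.continuousAt
  have hcont2 : Continuous fun θ => deriv (deriv ψ) (circpt θ) := by
    rw [continuous_iff_continuousAt]
    intro θ
    exact ((hana'.deriv _ (hmem θ)).continuousAt).comp circpt_continuous.continuousAt
  have hcontinv : Continuous fun θ =>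
      ((‖deriv ψ (circpt θ)‖ ^ 2 : ℝ) : ℂ)⁻¹ := by
    have : Continuous fun θ => ((‖deriv ψ (circpt θ)‖ ^ 2 : ℝ) : ℂ) :=
      Complex.continuous_ofReal.comp ((continuous_norm.comp hcont1).pow 2)
    apply this.inv₀
    intro θ
    rw [hcast θ]
    exact mul_ne_zero (hAne θ) (hcAne θ)
  have hcf₁ : Continuous f₁ := by
    rw [hf₁_def]
    exact (((circpt_continuous.pow 2).mul hcont2).div hcont1 hAne).mul hcontinv
  have hcf₂ : Continuous f₂ := by
    rw [hf₂_def]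
    apply Continuous.mul (Continuous.mul ?_ circpt_continuous) hcontinv
    exact continuous_const.add
      (Complex.continuous_conj.comp ((circpt_continuous.mul hcont2).div hcont1 hAne))
  have hint₁ : IntervalIntegrable f₁ volume 0 (2 * Real.pi) := hcf₁.intervalIntegrable _ _
  have hint₂ : IntervalIntegrable f₂ volume 0 (2 * Real.pi) := hcf₂.intervalIntegrable _ _
  have hFTC : (∫ θ in (0:ℝ)..(2 * Real.pi), (f₁ θ - f₂ θ))
      = G (2 * Real.pi) - G 0 :=
    intervalIntegral.integral_eq_sub_of_hasDerivAt (fun θ _ => hderiv θ)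
      ((hcf₁.sub hcf₂).intervalIntegrable _ _)
  have hper : G (2 * Real.pi) = G 0 := by
    have h0 : circpt (2 * Real.pi) = circpt 0 := by
      unfold circpt
      push_cast
      rw [Complex.exp_two_pi_mul_I]
      simp
    simp only [hG_def, h0]
  rw [intervalIntegral.integral_sub hint₁ hint₂, hper, sub_self] at hFTC
  exact sub_eq_zero.mp hFTC
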